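/- Let P_0 be an arbitrary real symmetric n×n matrix. Then the matrix-valued function P^0(t) := Σ_{i=1}^{n} Σ_{j=1}^{n} { e^{(λ_i+λ̄_j)t} · R_i P_0 R_j^† }_H satisfies P^0(0) = P_0 and, for every t ∈ ℝ, P^0 is differentiable at t with derivative P^0{}'(t) = A_C P^0(t) + P^0(t) A_C^T (i.e., P^0 solves the homogeneous differential Lyapunov equation with initial condition P_0). -/

import Mathlib

open Matrix Finset

noncomputable section

/-- `N(s) = s^n + ∑_{k<n} a_k s^k`, the characteristic polynomial as a function. -/
def Npoly (n : ℕ) (a : Fin n → ℝ) : ℂ → ℂ :=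
  fun s => s ^ n + ∑ k : Fin n, (a k : ℂ) * s ^ (k : ℕ)

/-- The companion matrix `A_C` (over `ℂ`, with real entries). -/
def Acomp (n : ℕ) (a : Fin n → ℝ) : Matrix (Fin n) (Fin n) ℂ :=
  Matrix.of fun μ ν =>
    if (μ : ℕ) + 1 = n then -(a ν : ℂ)
    else if (ν : ℕ) = (μ : ℕ) + 1 then 1 else 0

/-- The right eigenvector `x_i`, `(x_i)_μ = λ_i^{μ-1}` (0-based: `λ_i^μ`). -/
def xvec (n : ℕ) (lam : Fin n → ℂ) (i : Fin n) : Fin n → ℂ :=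
  fun μ => lam i ^ (μ : ℕ)

/-- The left eigenvector `y_i`, `(y_i)_μ = -∑_{k=μ}^{n} a_k λ_i^{k-μ}` (1-based indices,
with `a_n = 1`). -/
def yvec (n : ℕ) (a : Fin n → ℝ) (lam : Fin n → ℂ) (i : Fin n) : Fin n → ℂ :=
  fun μ => -(lam i ^ (n - 1 - (μ : ℕ)) +
    ∑ k : Fin n, if (μ : ℕ) < (k : ℕ) then (a k : ℂ) * lam i ^ ((k : ℕ) - (μ : ℕ) - 1) else 0)

/-- The residue matrix `R_i = x_i y_i^T / (-N'(λ_i))`. -/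
def Rres (n : ℕ) (a : Fin n → ℝ) (lam : Fin n → ℂ) (i : Fin n) :
    Matrix (Fin n) (Fin n) ℂ :=
  (-(deriv (Npoly n a) (lam i)))⁻¹ • Matrix.vecMulVec (xvec n lam i) (yvec n a lam i)

/-- `J = diag((-1)^1, …, (-1)^n)`. -/
def Jmat (n : ℕ) : Matrix (Fin n) (Fin n) ℂ :=
  Matrix.diagonal fun μ => (-1 : ℂ) ^ ((μ : ℕ) + 1)

/-- Hermitian part `{M}_H = (M + Mᴴ)/2`. -/
def hermPart {m : Type*} [Fintype m] (M : Matrix m m ℂ) : Matrix m m ℂ :=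
  (2 : ℂ)⁻¹ • (M + Mᴴ)

/-- The last standard basis vector `e_n`. -/
def evec (n : ℕ) : Fin n → ℂ := fun μ => if (μ : ℕ) = n - 1 then 1 else 0


lemma acomp_mulVec_xvec {n : ℕ} (a : Fin n → ℝ) (lam : Fin n → ℂ) (i : Fin n)
    (hroot : Npoly n a (lam i) = 0) :
    (Acomp n a).mulVec (xvec n lam i) = lam i • xvec n lam i := by
  funext μ
  simp only [Matrix.mulVec, dotProduct, Acomp, xvec, Matrix.of_apply, Pi.smul_apply,
    smul_eq_mul]
  by_cases h : (μ : ℕ) + 1 = n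
  · simp only [h, if_pos rfl, if_true]
    have hN : lam i ^ n + ∑ k : Fin n, (a k : ℂ) * lam i ^ (k : ℕ) = 0 := hroot
    have : ∑ ν : Fin n, -(a ν : ℂ) * lam i ^ (ν : ℕ) = lam i ^ n := by
      simp only [neg_mul, Finset.sum_neg_distrib]
      linear_combination -hN
    rw [this, show lam i ^ n = lam i ^ ((μ : ℕ) + 1) by rw [h], pow_succ]
    ring
  · simp only [h, if_false]
    have hlt : (μ : ℕ) + 1 < n := by have := μ.isLt; omega
    rw [Finset.sum_eq_single (⟨(μ : ℕ) + 1, hlt⟩ : Fin n)]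
    · simp [pow_succ]; ring
    · intro b _ hb
      rw [if_neg, zero_mul]
      intro hc
      exact hb (Fin.ext hc)
    · intro hmem; exact absurd (Finset.mem_univ _) hmem
lemma hsplit_sum {n : ℕ} (a : Fin n → ℝ) (lam : Fin n → ℂ) (i : Fin n) (m : Fin n) :
    ∑ k : Fin n, (if (m : ℕ) ≤ (k : ℕ) then (a k : ℂ) * lam i ^ ((k : ℕ) - (m : ℕ)) else 0)
      = (a m : ℂ) + ∑ k : Fin n, (if (m : ℕ) < (k : ℕ) then (a k : ℂ) * lam i ^ ((k : ℕ) - (m : ℕ)) else 0) := by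
  have : ∀ k : Fin n,
      (if (m : ℕ) ≤ (k : ℕ) then (a k : ℂ) * lam i ^ ((k : ℕ) - (m : ℕ)) else 0)
        = (if k = m then (a m : ℂ) else 0)
          + (if (m : ℕ) < (k : ℕ) then (a k : ℂ) * lam i ^ ((k : ℕ) - (m : ℕ)) else 0) := by
    intro k
    rcases lt_trichotomy ((m : ℕ)) ((k : ℕ)) with h | h | h
    · rw [if_pos h.le, if_neg (by intro hk; subst hk; omega), if_pos h, zero_add]
    · have hk : k = m := Fin.ext h.symm
      subst hk
      simp
    · rw [if_neg (by omega), if_neg (by intro hk; subst hk; omega), if_neg (by omega), add_zero]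
  rw [Finset.sum_congr rfl fun k _ => this k, Finset.sum_add_distrib,
    Finset.sum_ite_eq' Finset.univ m (fun _ => (a m : ℂ)), if_pos (Finset.mem_univ m)]
lemma lam_mul_yvec {n : ℕ} (a : Fin n → ℝ) (lam : Fin n → ℂ) (i : Fin n) (m : Fin n) :
    lam i * yvec n a lam i m
      = -(lam i ^ (n - (m : ℕ)) +
          ∑ k : Fin n, (if (m : ℕ) < (k : ℕ) then (a k : ℂ) * lam i ^ ((k : ℕ) - (m : ℕ)) else 0)) := by
  simp only [yvec, mul_neg, neg_inj, mul_add, Finset.mul_sum]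
  congr 1
  · rw [show n - (m : ℕ) = (n - 1 - (m : ℕ)) + 1 by have := m.isLt; omega, pow_succ]
    ring
  · refine Finset.sum_congr rfl fun k _ => ?_
    split_ifs with h
    · have he : (k : ℕ) - (m : ℕ) = ((k : ℕ) - (m : ℕ) - 1) + 1 := by omega
      calc lam i * ((a k : ℂ) * lam i ^ ((k : ℕ) - (m : ℕ) - 1))
          = (a k : ℂ) * lam i ^ (((k : ℕ) - (m : ℕ) - 1) + 1) := by rw [pow_succ]; ring
        _ = (a k : ℂ) * lam i ^ ((k : ℕ) - (m : ℕ)) := by rw [← he]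
    · ring
lemma yvec_vecMul_acomp {n : ℕ} (a : Fin n → ℝ) (lam : Fin n → ℂ) (i : Fin n)
    (hroot : Npoly n a (lam i) = 0) :
    Matrix.vecMul (yvec n a lam i) (Acomp n a) = lam i • yvec n a lam i := by
  have hn : 0 < n := i.pos
  have ylast : yvec n a lam i ⟨n - 1, by omega⟩ = -1 := by
    simp only [yvec, Nat.sub_self, pow_zero]
    rw [Finset.sum_eq_zero fun k _ => if_neg (by have := k.isLt; omega)]
    norm_num
  funext ν
  simp only [Matrix.vecMul, dotProduct, Acomp, Matrix.of_apply, Pi.smul_apply, smul_eq_mul]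
  by_cases hν : (ν : ℕ) = 0
  · -- only the last row contributes
    rw [Finset.sum_eq_single (⟨n - 1, by omega⟩ : Fin n)]
    · rw [if_pos (by simp; omega), ylast]
      have h1 := lam_mul_yvec a lam i ν
      have h2 := hsplit_sum a lam i ν
      have h3 : ∑ k : Fin n, (if (ν : ℕ) ≤ (k : ℕ) then (a k : ℂ) * lam i ^ ((k : ℕ) - (ν : ℕ)) else 0)
          = ∑ k : Fin n, (a k : ℂ) * lam i ^ (k : ℕ) := by
        refine Finset.sum_congr rfl fun k _ => ?_
        rw [if_pos (by omega), hν, Nat.sub_zero]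
      have hN : lam i ^ n + ∑ k : Fin n, (a k : ℂ) * lam i ^ (k : ℕ) = 0 := hroot
      rw [h1, show n - (ν : ℕ) = n by omega]
      rw [h3] at h2
      linear_combination hN - h2
    · intro b _ hb
      simp only [ne_eq, Fin.ext_iff, Fin.val_mk] at hb
      rw [if_neg (by omega), if_neg (by omega), mul_zero]
    · intro hmem; exact absurd (Finset.mem_univ _) hmem
  · -- rows ν-1 and n-1 contribute
    have hνn : (ν : ℕ) < n := ν.isLt
    have hν1 : (ν : ℕ) - 1 < n := by omega
    rw [Finset.sum_eq_add_of_mem (⟨(ν : ℕ) - 1, hν1⟩ : Fin n) (⟨n - 1, by omega⟩ : Fin n)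
      (Finset.mem_univ _) (Finset.mem_univ _)
      (by simp only [ne_eq, Fin.ext_iff, Fin.val_mk]; omega)
      ?_]
    · have e1 : ((if ((⟨(ν : ℕ) - 1, hν1⟩ : Fin n) : ℕ) + 1 = n then -(a ν : ℂ)
          else if (ν : ℕ) = ((⟨(ν : ℕ) - 1, hν1⟩ : Fin n) : ℕ) + 1 then 1 else 0)) = 1 := by
        rw [if_neg (by simp only [Fin.val_mk]; omega), if_pos (by simp only [Fin.val_mk]; omega)]
      have e2 : ((if ((⟨n - 1, by omega⟩ : Fin n) : ℕ) + 1 = n then -(a ν : ℂ)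
          else if (ν : ℕ) = ((⟨n - 1, by omega⟩ : Fin n) : ℕ) + 1 then 1 else 0)) = -(a ν : ℂ) := by
        rw [if_pos (by simp only [Fin.val_mk]; omega)]
      rw [e1, e2, ylast]
      have hyp : yvec n a lam i (⟨(ν : ℕ) - 1, hν1⟩ : Fin n)
          = -(lam i ^ (n - (ν : ℕ)) + ((a ν : ℂ) +
              ∑ k : Fin n, (if (ν : ℕ) < (k : ℕ) then (a k : ℂ) * lam i ^ ((k : ℕ) - (ν : ℕ)) else 0))) := by
        have hc : ∑ k : Fin n,
              (if (((⟨(ν : ℕ) - 1, hν1⟩ : Fin n)) : ℕ) < (k : ℕ) then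
                (a k : ℂ) * lam i ^ ((k : ℕ) - (((⟨(ν : ℕ) - 1, hν1⟩ : Fin n)) : ℕ) - 1) else 0)
            = ∑ k : Fin n, (if (ν : ℕ) ≤ (k : ℕ) then (a k : ℂ) * lam i ^ ((k : ℕ) - (ν : ℕ)) else 0) := by
          refine Finset.sum_congr rfl fun k _ => ?_
          simp only [Fin.val_mk]
          split_ifs with h1 h2 h2
          · congr 2; omega
          · omega
          · omega
          · rfl
        simp only [yvec, hc, hsplit_sum a lam i ν]
        have hval : n - 1 - (((⟨(ν : ℕ) - 1, hν1⟩ : Fin n)) : ℕ) = n - (ν : ℕ) := by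
          show n - 1 - ((ν : ℕ) - 1) = n - (ν : ℕ)
          omega
        rw [hval]
      rw [hyp, lam_mul_yvec a lam i ν]
      ring
    · intro b _ hb
      obtain ⟨hb1, hb2⟩ := hb
      simp only [ne_eq, Fin.ext_iff, Fin.val_mk] at hb1 hb2
      rw [if_neg (by omega), if_neg (by omega), mul_zero]
lemma sum_ite_lt' {n k : ℕ} (hk : k ≤ n) (c : ℂ) :
    ∑ μ : Fin n, (if (μ : ℕ) < k then c else 0) = k * c := by
  rw [Fin.sum_univ_eq_sum_range (fun m => if m < k then c else 0) n, ← Finset.sum_filter]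
  have : (Finset.range n).filter (fun m => m < k) = Finset.range k := by
    ext m; simp only [Finset.mem_filter, Finset.mem_range]; omega
  rw [this, Finset.sum_const, Finset.card_range, nsmul_eq_mul]
lemma hasDerivAt_Npoly (n : ℕ) (a : Fin n → ℝ) (s : ℂ) :
    HasDerivAt (Npoly n a)
      ((n : ℂ) * s ^ (n - 1) + ∑ k : Fin n, (a k : ℂ) * (((k : ℕ) : ℂ) * s ^ ((k : ℕ) - 1))) s := by
  unfold Npoly
  exact (hasDerivAt_pow n s).add
    (HasDerivAt.fun_sum fun k _ => (hasDerivAt_pow (k : ℕ) s).const_mul _)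
lemma yvec_dot_xvec_self {n : ℕ} (a : Fin n → ℝ) (lam : Fin n → ℂ) (i : Fin n) :
    yvec n a lam i ⬝ᵥ xvec n lam i = -(deriv (Npoly n a) (lam i)) := by
  rw [(hasDerivAt_Npoly n a (lam i)).deriv]
  simp only [dotProduct, yvec, xvec]
  have h1 : ∀ μ : Fin n,
      (-(lam i ^ (n - 1 - (μ : ℕ)) +
        ∑ k : Fin n, if (μ : ℕ) < (k : ℕ) then (a k : ℂ) * lam i ^ ((k : ℕ) - (μ : ℕ) - 1) else 0))
          * lam i ^ (μ : ℕ)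
      = -(lam i ^ (n - 1) +
          ∑ k : Fin n, if (μ : ℕ) < (k : ℕ) then (a k : ℂ) * lam i ^ ((k : ℕ) - 1) else 0) := by
    intro μ
    have hp : lam i ^ (n - 1 - (μ : ℕ)) * lam i ^ (μ : ℕ) = lam i ^ (n - 1) := by
      rw [← pow_add]; congr 1; have := μ.isLt; omega
    have hs : (∑ k : Fin n, if (μ : ℕ) < (k : ℕ) then (a k : ℂ) * lam i ^ ((k : ℕ) - (μ : ℕ) - 1) else 0)
          * lam i ^ (μ : ℕ)
        = ∑ k : Fin n, if (μ : ℕ) < (k : ℕ) then (a k : ℂ) * lam i ^ ((k : ℕ) - 1) else 0 := by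
      rw [Finset.sum_mul]
      refine Finset.sum_congr rfl fun k _ => ?_
      split_ifs with h
      · rw [mul_assoc, ← pow_add]; congr 2; omega
      · rw [zero_mul]
    rw [neg_mul, add_mul, hp, hs]
  rw [Finset.sum_congr rfl fun μ _ => h1 μ, Finset.sum_neg_distrib, Finset.sum_add_distrib,
    Finset.sum_const, Finset.card_univ, Fintype.card_fin, nsmul_eq_mul, neg_inj]
  congr 1
  rw [Finset.sum_comm]
  refine Finset.sum_congr rfl fun k _ => ?_
  rw [sum_ite_lt' (le_of_lt k.isLt) ((a k : ℂ) * lam i ^ ((k : ℕ) - 1))]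
  ring
lemma yvec_dot_xvec_ne {n : ℕ} (a : Fin n → ℝ) (lam : Fin n → ℂ) (i j : Fin n)
    (hrooti : Npoly n a (lam i) = 0) (hrootj : Npoly n a (lam j) = 0)
    (hij : lam i ≠ lam j) :
    yvec n a lam i ⬝ᵥ xvec n lam j = 0 := by
  have h1 : yvec n a lam i ⬝ᵥ (Acomp n a).mulVec (xvec n lam j)
      = lam j * (yvec n a lam i ⬝ᵥ xvec n lam j) := by
    rw [acomp_mulVec_xvec a lam j hrootj, dotProduct_smul, smul_eq_mul]
  have h2 : yvec n a lam i ⬝ᵥ (Acomp n a).mulVec (xvec n lam j)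
      = lam i * (yvec n a lam i ⬝ᵥ xvec n lam j) := by
    rw [Matrix.dotProduct_mulVec, yvec_vecMul_acomp a lam i hrooti, smul_dotProduct, smul_eq_mul]
  have h3 : (lam j - lam i) * (yvec n a lam i ⬝ᵥ xvec n lam j) = 0 := by
    rw [sub_mul, ← h1, ← h2, sub_self]
  rcases mul_eq_zero.mp h3 with h | h
  · exact absurd (sub_eq_zero.mp h).symm hij
  · exact h
lemma vecMulVec_mulVec' {n : ℕ} (u v w : Fin n → ℂ) :
    (Matrix.vecMulVec u v).mulVec w = (v ⬝ᵥ w) • u := by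
  funext μ
  simp only [Matrix.mulVec, dotProduct, vecMulVec_apply, Pi.smul_apply, smul_eq_mul,
    Finset.sum_mul]
  exact Finset.sum_congr rfl fun ν _ => by ring
lemma mul_vecMulVec' {n : ℕ} (A : Matrix (Fin n) (Fin n) ℂ) (u v : Fin n → ℂ) :
    A * Matrix.vecMulVec u v = Matrix.vecMulVec (A.mulVec u) v := by
  ext μ ν
  simp only [Matrix.mul_apply, vecMulVec_apply, Matrix.mulVec, dotProduct, Finset.sum_mul]
  exact Finset.sum_congr rfl fun κ _ => by ring
lemma vecMulVec_smul_left' {n : ℕ} (c : ℂ) (u v : Fin n → ℂ) :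
    Matrix.vecMulVec (c • u) v = c • Matrix.vecMulVec u v := by
  ext μ ν
  simp [vecMulVec_apply, smul_eq_mul, mul_assoc]
lemma Rres_mulVec_xvec {n : ℕ} (a : Fin n → ℝ) (lam : Fin n → ℂ)
    (hroot : ∀ i, Npoly n a (lam i) = 0) (hdist : Function.Injective lam)
    (hNp : ∀ i, deriv (Npoly n a) (lam i) ≠ 0) (i j : Fin n) :
    (Rres n a lam i).mulVec (xvec n lam j) = if i = j then xvec n lam j else 0 := by
  unfold Rres
  rw [Matrix.smul_mulVec, vecMulVec_mulVec']
  by_cases h : i = j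
  · subst h
    rw [if_pos rfl, yvec_dot_xvec_self, smul_smul,
      inv_mul_cancel₀ (neg_ne_zero.mpr (hNp i)), one_smul]
  · rw [if_neg h, yvec_dot_xvec_ne a lam i j (hroot i) (hroot j)
      (fun hc => h (hdist hc)), zero_smul, smul_zero]
lemma sum_Rres {n : ℕ} (a : Fin n → ℝ) (lam : Fin n → ℂ)
    (hroot : ∀ i, Npoly n a (lam i) = 0) (hdist : Function.Injective lam)
    (hNp : ∀ i, deriv (Npoly n a) (lam i) ≠ 0) :
    ∑ i, Rres n a lam i = 1 := by
  have hdet : (Matrix.vandermonde lam).det ≠ 0 := by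
    rw [Matrix.det_vandermonde]
    refine Finset.prod_ne_zero_iff.mpr fun i _ => Finset.prod_ne_zero_iff.mpr fun j hj => ?_
    rw [Finset.mem_Ioi] at hj
    exact sub_ne_zero.mpr fun hc => absurd (hdist hc) (ne_of_gt hj)
  set V : Matrix (Fin n) (Fin n) ℂ := (Matrix.vandermonde lam)ᵀ with hV
  have hVdet : IsUnit V.det := by
    rw [hV, Matrix.det_transpose]
    exact Ne.isUnit hdet
  have hMV : (∑ i, Rres n a lam i) * V = V := by
    ext μ j
    rw [Finset.sum_mul, Matrix.sum_apply]
    have hterm : ∀ i, (Rres n a lam i * V) μ j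
        = ((Rres n a lam i).mulVec (xvec n lam j)) μ := fun i => rfl
    rw [Finset.sum_congr rfl fun i _ => hterm i]
    have : ∀ i : Fin n, ((Rres n a lam i).mulVec (xvec n lam j)) μ
        = if i = j then xvec n lam j μ else 0 := by
      intro i
      rw [Rres_mulVec_xvec a lam hroot hdist hNp i j]
      split_ifs <;> rfl
    rw [Finset.sum_congr rfl fun i _ => this i, Finset.sum_ite_eq' Finset.univ j,
      if_pos (Finset.mem_univ j)]
    rfl
  calc ∑ i, Rres n a lam i = (∑ i, Rres n a lam i) * 1 := (mul_one _).symm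
    _ = (∑ i, Rres n a lam i) * (V * V⁻¹) := by rw [Matrix.mul_nonsing_inv V hVdet]
    _ = ((∑ i, Rres n a lam i) * V) * V⁻¹ := by rw [Matrix.mul_assoc]
    _ = V * V⁻¹ := by rw [hMV]
    _ = 1 := Matrix.mul_nonsing_inv V hVdet
lemma acomp_mul_Rres {n : ℕ} (a : Fin n → ℝ) (lam : Fin n → ℂ) (i : Fin n)
    (hroot : Npoly n a (lam i) = 0) :
    Acomp n a * Rres n a lam i = lam i • Rres n a lam i := by
  unfold Rres
  rw [mul_smul_comm, mul_vecMulVec', acomp_mulVec_xvec a lam i hroot, vecMulVec_smul_left',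
    smul_comm]
lemma acomp_conjTranspose (n : ℕ) (a : Fin n → ℝ) : (Acomp n a)ᴴ = (Acomp n a)ᵀ := by
  ext μ ν
  simp only [conjTranspose_apply, transpose_apply, Acomp, Matrix.of_apply]
  split_ifs <;> simp
lemma RresH_mul_acompT {n : ℕ} (a : Fin n → ℝ) (lam : Fin n → ℂ) (j : Fin n)
    (hroot : Npoly n a (lam j) = 0) :
    (Rres n a lam j)ᴴ * (Acomp n a)ᵀ = (starRingEnd ℂ) (lam j) • (Rres n a lam j)ᴴ := by
  rw [← acomp_conjTranspose, ← conjTranspose_mul, acomp_mul_Rres a lam j hroot,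
    conjTranspose_smul]
  rfl

attribute [local instance] Matrix.normedAddCommGroup Matrix.normedSpace

/-- For any real symmetric `P_0`, the function
`P⁰(t) = ∑ i j { e^{(λ_i+conj λ_j)t} R_i P_0 R_jᴴ }_H` solves the homogeneous differential
Lyapunov equation with initial condition `P_0`. -/
theorem stmt6 (n : ℕ) (hn : 0 < n) (a : Fin n → ℝ) (lam : Fin n → ℂ)
    (hroot : ∀ i, Npoly n a (lam i) = 0)
    (hdist : Function.Injective lam)
    (hNp : ∀ i, deriv (Npoly n a) (lam i) ≠ 0)
    (P0 : Matrix (Fin n) (Fin n) ℝ) (hP0 : P0ᵀ = P0)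
    (P : ℝ → Matrix (Fin n) (Fin n) ℂ)
    (hP : P = fun t : ℝ => ∑ i, ∑ j, hermPart
        (Complex.exp ((lam i + (starRingEnd ℂ) (lam j)) * (t : ℂ)) •
          (Rres n a lam i * P0.map Complex.ofReal * (Rres n a lam j)ᴴ))) :
    P 0 = P0.map Complex.ofReal ∧ ∀ t : ℝ,
      HasDerivAt P (Acomp n a * P t + P t * (Acomp n a)ᵀ) t := by
  set P0c : Matrix (Fin n) (Fin n) ℂ := P0.map Complex.ofReal with hP0c
  have hP0cH : P0cᴴ = P0c := by
    ext μ ν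
    simp only [hP0c, conjTranspose_apply, Matrix.map_apply, Complex.star_def,
      Complex.conj_ofReal]
    have h := congrFun (congrFun hP0 μ) ν
    simp only [transpose_apply] at h
    exact_mod_cast h
  set B : Fin n → Fin n → Matrix (Fin n) (Fin n) ℂ :=
    fun i j => Rres n a lam i * P0c * (Rres n a lam j)ᴴ with hB
  have hBH : ∀ i j, (B i j)ᴴ = B j i := by
    intro i j
    simp only [hB, conjTranspose_mul, conjTranspose_conjTranspose, hP0cH, Matrix.mul_assoc]
  have hc : ∀ (i j : Fin n) (t : ℝ),
      (starRingEnd ℂ) (Complex.exp ((lam i + (starRingEnd ℂ) (lam j)) * (t : ℂ)))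
        = Complex.exp ((lam j + (starRingEnd ℂ) (lam i)) * (t : ℂ)) := by
    intro i j t
    rw [← Complex.exp_conj]
    congr 1
    rw [_root_.map_mul, _root_.map_add, Complex.conj_conj, Complex.conj_ofReal, add_comm]
  have hPQ : P = fun t : ℝ => ∑ i, ∑ j,
      Complex.exp ((lam i + (starRingEnd ℂ) (lam j)) * (t : ℂ)) • B i j := by
    rw [hP]
    funext t
    have hherm : ∀ i j, hermPart
        (Complex.exp ((lam i + (starRingEnd ℂ) (lam j)) * (t : ℂ)) • B i j)
        = (2 : ℂ)⁻¹ • (Complex.exp ((lam i + (starRingEnd ℂ) (lam j)) * (t : ℂ)) • B i j)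
          + (2 : ℂ)⁻¹ • (Complex.exp ((lam j + (starRingEnd ℂ) (lam i)) * (t : ℂ)) • B j i) := by
      intro i j
      rw [hermPart, conjTranspose_smul, hBH, Complex.star_def, hc, smul_add]
    refine Eq.trans
      (Finset.sum_congr rfl fun i _ => Finset.sum_congr rfl fun j _ => hherm i j) ?_
    simp only [Finset.sum_add_distrib]
    rw [Finset.sum_comm (s := (Finset.univ : Finset (Fin n))) (t := (Finset.univ : Finset (Fin n)))
      (f := fun i j => (2 : ℂ)⁻¹ • (Complex.exp ((lam j + (starRingEnd ℂ) (lam i)) * (t : ℂ)) • B j i))]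
    rw [← Finset.sum_add_distrib]
    refine Finset.sum_congr rfl fun i _ => ?_
    rw [← Finset.sum_add_distrib]
    refine Finset.sum_congr rfl fun j _ => ?_
    rw [← add_smul]
    norm_num
  constructor
  · rw [hPQ]
    simp only [Complex.ofReal_zero, mul_zero, Complex.exp_zero, one_smul]
    have hsum : ∀ i, ∑ j, B i j = Rres n a lam i * P0c := by
      intro i
      have : ∑ j, B i j = Rres n a lam i * P0c * (∑ j, Rres n a lam j)ᴴ := by
        rw [conjTranspose_sum, Finset.mul_sum]
      rw [this, sum_Rres a lam hroot hdist hNp, conjTranspose_one, mul_one]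
    rw [Finset.sum_congr rfl fun i _ => hsum i, ← Finset.sum_mul,
      sum_Rres a lam hroot hdist hNp, one_mul]
  · intro t
    rw [hPQ]
    have hD : ∀ i j : Fin n, HasDerivAt
        (fun t : ℝ => Complex.exp ((lam i + (starRingEnd ℂ) (lam j)) * (t : ℂ)) • B i j)
        ((Complex.exp ((lam i + (starRingEnd ℂ) (lam j)) * (t : ℂ))
          * (lam i + (starRingEnd ℂ) (lam j))) • B i j) t := by
      intro i j
      have h1 : HasDerivAt (fun t : ℝ => ((lam i + (starRingEnd ℂ) (lam j)) * (t : ℂ)))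
          (lam i + (starRingEnd ℂ) (lam j)) t := by
        simpa using (Complex.ofRealCLM.hasDerivAt (x := t)).const_mul
          (lam i + (starRingEnd ℂ) (lam j))
      exact (h1.cexp).smul_const (B i j)
    have hsum := HasDerivAt.fun_sum (𝕜 := ℝ) (x := t)
      (u := (Finset.univ : Finset (Fin n)))
      (A := fun i => fun t : ℝ => ∑ j, Complex.exp ((lam i + (starRingEnd ℂ) (lam j)) * (t : ℂ)) • B i j)
      (A' := fun i => ∑ j, (Complex.exp ((lam i + (starRingEnd ℂ) (lam j)) * (t : ℂ))
          * (lam i + (starRingEnd ℂ) (lam j))) • B i j)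
      (fun i _ => HasDerivAt.fun_sum (fun j _ => hD i j))
    have hQ : Acomp n a * (∑ i, ∑ j,
          Complex.exp ((lam i + (starRingEnd ℂ) (lam j)) * (t : ℂ)) • B i j)
        + (∑ i, ∑ j, Complex.exp ((lam i + (starRingEnd ℂ) (lam j)) * (t : ℂ)) • B i j)
          * (Acomp n a)ᵀ
        = ∑ i, ∑ j, (Complex.exp ((lam i + (starRingEnd ℂ) (lam j)) * (t : ℂ))
            * (lam i + (starRingEnd ℂ) (lam j))) • B i j := by
      rw [Finset.mul_sum, Finset.sum_mul, ← Finset.sum_add_distrib]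
      refine Finset.sum_congr rfl fun i _ => ?_
      rw [Finset.mul_sum, Finset.sum_mul, ← Finset.sum_add_distrib]
      refine Finset.sum_congr rfl fun j _ => ?_
      have hA : Acomp n a * B i j = lam i • B i j := by
        simp only [hB, ← Matrix.mul_assoc, acomp_mul_Rres a lam i (hroot i),
          Matrix.smul_mul]
      have hAT : B i j * (Acomp n a)ᵀ = (starRingEnd ℂ) (lam j) • B i j := by
        simp only [hB, Matrix.mul_assoc, RresH_mul_acompT a lam j (hroot j), mul_smul_comm]
      rw [mul_smul_comm, smul_mul_assoc, hA, hAT, smul_smul, smul_smul, ← add_smul]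
      congr 1
      ring
    rw [← hQ] at hsum
    exact hsum


end
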